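/- Let (Ω, f, g, λ) and (Ω', f', g', λ') be Rado decorated graphs and let φ : Ω → Ω' be an isomorphism of decorated graphs. Then φ(v_ℓ(1)) = v_ℓ(1)' and φ(v_ℓ(2)) = v_ℓ(2)', i.e. φ preserves the indexing of the two elements of the fiber of f over ∞. -/
import Mathlib


/-!
Statement 9: An isomorphism between two Rado decorated graphs (for an odd prime
`ℓ`) preserves the indexing of the two distinguished vertices `v_ℓ(1)`, `v_ℓ(2)`.

Residues mod `ℓ^n` are encoded as natural numbers `< ℓ^n`; an element of
`(ℤ/ℓ^n)^×` is a natural number `< ℓ^n` not divisible by `ℓ`.  The isomorphism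
`log_ℓ` is encoded by the function `lg : ℤ_ℓ → ℤ_ℓ`, `lg x = log_ℓ (1 + ℓx)`.
-/

noncomputable section

open scoped Classical ENat

/-- `lg` encodes a (topological) group isomorphism `log_ℓ : 1 + ℓℤ_ℓ ≃ ℤ_ℓ`
via `lg x = log_ℓ (1 + ℓ x)` (note `(1+ℓx)(1+ℓy) = 1 + ℓ(x + y + ℓxy)`). -/
structure IsLogIso (ℓ : ℕ) [Fact ℓ.Prime] (lg : ℤ_[ℓ] → ℤ_[ℓ]) : Prop where
  bijective : Function.Bijective lg
  map_mul : ∀ x y : ℤ_[ℓ], lg (x + y + (ℓ : ℤ_[ℓ]) * x * y) = lg x + lg y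
  continuous : Continuous lg

/-- The value of `log_ℓ (1 + a·ℓ^n) mod ℓ^n`, as a natural number `< ℓ^n`
(for `n ≥ 1`). -/
def logVal (ℓ : ℕ) [Fact ℓ.Prime] (lg : ℤ_[ℓ] → ℤ_[ℓ]) (n : ℕ) (a : ℤ_[ℓ]) : ℕ :=
  (PadicInt.toZModPow n (lg (a * (ℓ : ℤ_[ℓ]) ^ (n - 1)))).val

/-- The raw data of a decorated graph: a vertex set `Ω`, the function
`f : Ω → ℤ_{≥1} ∪ {∞}`, the two distinguished vertices `v1 = v_ℓ(1)`,
`v2 = v_ℓ(2)`, the decoration `g` and the labeling `lab`. -/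
structure GraphData where
  Ω : Type
  f : Ω → ℕ∞
  v1 : Ω
  v2 : Ω
  g : Ω → ℕ
  lab : Ω → Ω → ℕ

namespace GraphData

variable (D : GraphData)

/-- `f(v,w) = min (f v) (f w)`, as a natural number (it is finite on all pairs
carrying a label). -/
def fm (v w : D.Ω) : ℕ := (min (D.f v) (D.f w)).toNat

/-- The pairs `(v,w)` carrying a label: distinct, not both in the fiber over `∞`. -/
def Rel (v w : D.Ω) : Prop := v ≠ w ∧ ¬ (D.f v = ⊤ ∧ D.f w = ⊤)

/-- `D` is a decorated graph for the odd prime `ℓ` and the logarithm `lg`. -/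
def IsDecorated (ℓ : ℕ) [Fact ℓ.Prime] (lg : ℤ_[ℓ] → ℤ_[ℓ]) : Prop :=
  Countable D.Ω ∧ Infinite D.Ω ∧
  (∀ v, 1 ≤ D.f v) ∧
  D.v1 ≠ D.v2 ∧ D.f D.v1 = ⊤ ∧ D.f D.v2 = ⊤ ∧
  (∀ v, D.f v = ⊤ → v = D.v1 ∨ v = D.v2) ∧
  (∀ v, D.f v ≠ ⊤ → D.g v < ℓ ^ (D.f v).toNat ∧ ¬ ℓ ∣ D.g v) ∧
  (∀ v w, D.Rel v w → D.lab v w < ℓ ^ D.fm v w) ∧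
  (∀ w, D.f w ≠ ⊤ → D.lab D.v1 w = logVal ℓ lg (D.f w).toNat (D.g w : ℤ_[ℓ])) ∧
  (∀ w, D.f w ≠ ⊤ → D.lab w D.v1 = 0 ∧ D.lab w D.v2 = 0)

/-- `D` is Rado. -/
def IsRado (ℓ : ℕ) [Fact ℓ.Prime] (lg : ℤ_[ℓ] → ℤ_[ℓ]) : Prop :=
  ∀ S : Finset D.Ω, D.v1 ∈ S → D.v2 ∈ S →
  ∀ n : ℕ, 1 ≤ n →
  ∀ α : ℕ, α < ℓ ^ n → ¬ ℓ ∣ α →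
  ∀ μ₁ μ₂ : D.Ω → ℕ,
    (∀ s ∈ S, μ₁ s < ℓ ^ (min (n : ℕ∞) (D.f s)).toNat) →
    (∀ s ∈ S, μ₂ s < ℓ ^ (min (n : ℕ∞) (D.f s)).toNat) →
    μ₂ D.v1 = logVal ℓ lg n (α : ℤ_[ℓ]) →
    μ₁ D.v1 = 0 → μ₁ D.v2 = 0 →
    ∃ v : D.Ω, v ∉ S ∧ D.f v = (n : ℕ∞) ∧ D.g v = α ∧
      ∀ s ∈ S, D.lab v s = μ₁ s ∧ D.lab s v = μ₂ s

/-- `D` is weakly Rado. -/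
def IsWeaklyRado (ℓ : ℕ) [Fact ℓ.Prime] (lg : ℤ_[ℓ] → ℤ_[ℓ]) : Prop :=
  ∀ S : Finset D.Ω, D.v1 ∈ S → D.v2 ∈ S →
  ∀ n : ℕ, 1 ≤ n →
  ∀ α : ℕ, α < ℓ ^ n → ¬ ℓ ∣ α →
  ∀ μ₁ μ₂ : D.Ω → ℕ,
    (∀ s ∈ S, μ₁ s < ℓ ^ (min (n : ℕ∞) (D.f s)).toNat) →
    (∀ s ∈ S, μ₂ s < ℓ ^ (min (n : ℕ∞) (D.f s)).toNat) →
    μ₂ D.v1 = logVal ℓ lg n (α : ℤ_[ℓ]) →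
    μ₁ D.v1 = 0 → μ₁ D.v2 = 0 →
    ∃ v : D.Ω, v ∉ S ∧ ∃ γ : ℕ, γ < ℓ ^ n ∧ ¬ ℓ ∣ γ ∧
      D.f v = (n : ℕ∞) ∧ D.g v = α ∧
      ∀ s ∈ S, D.lab v s = (γ * μ₁ s) % ℓ ^ (min (n : ℕ∞) (D.f s)).toNat ∧
        D.lab s v = μ₂ s

/-- The scaling `γ_• · λ` of the labeling of `D`. -/
def scale (ℓ : ℕ) (γ : D.Ω → ℕ) : GraphData where
  Ω := D.Ω
  f := D.f
  v1 := D.v1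
  v2 := D.v2
  g := D.g
  lab := fun v w => if D.f v = ⊤ then D.lab v w else (γ v * D.lab v w) % ℓ ^ D.fm v w

/-- `D` is Rado up to scaling: some scaling `γ_• · λ` of its labeling by units
`γ_v ∈ (ℤ/ℓ^{f v})^×` is Rado. -/
def IsRadoUpToScaling (ℓ : ℕ) [Fact ℓ.Prime] (lg : ℤ_[ℓ] → ℤ_[ℓ]) : Prop :=
  ∃ γ : D.Ω → ℕ, (∀ v, D.f v ≠ ⊤ → γ v < ℓ ^ (D.f v).toNat ∧ ¬ ℓ ∣ γ v) ∧
    (D.scale ℓ γ).IsRado ℓ lg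

end GraphData

/-- An isomorphism of decorated graphs. -/
structure GraphIso (D D' : GraphData) where
  φ : D.Ω ≃ D'.Ω
  f_eq : ∀ v, D'.f (φ v) = D.f v
  g_eq : ∀ v, D.f v ≠ ⊤ → D'.g (φ v) = D.g v
  lab_eq : ∀ v w, D.Rel v w → D'.lab (φ v) (φ w) = D.lab v w

theorem statement9 (ℓ : ℕ) [Fact ℓ.Prime] (hodd : Odd ℓ)
    (lg : ℤ_[ℓ] → ℤ_[ℓ]) (hlg : IsLogIso ℓ lg)
    (D D' : GraphData) (hD : D.IsDecorated ℓ lg) (hD' : D'.IsDecorated ℓ lg)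
    (hRado : D.IsRado ℓ lg) (hRado' : D'.IsRado ℓ lg)
    (e : GraphIso D D') :
    e.φ D.v1 = D'.v1 ∧ e.φ D.v2 = D'.v2 := by
  obtain ⟨hc', hi', hf1', hne', hfv1', hfv2', hfiber', hg', hlt', hlabv1', hlab0'⟩ := hD'
  obtain ⟨hc, hi, hf1, hne, hfv1, hfv2, hfiber, hg, hlt, hlabv1, hlab0⟩ := hD
  have hℓp : ℓ.Prime := Fact.out
  have hℓ2 : 2 ≤ ℓ := hℓp.two_le
  have h1 : D'.f (e.φ D.v1) = ⊤ := by rw [e.f_eq]; exact hfv1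
  have h2 : D'.f (e.φ D.v2) = ⊤ := by rw [e.f_eq]; exact hfv2
  have hφne : e.φ D.v1 ≠ e.φ D.v2 := fun h => hne (e.φ.injective h)
  rcases hfiber' _ h1 with hA | hA
  · refine ⟨hA, ?_⟩
    rcases hfiber' _ h2 with hB | hB
    · exact (hφne (hA.trans hB.symm)).elim
    · exact hB
  · exfalso
    -- key claim: all labels from v2' to finite vertices are forced
    have key : ∀ w' : D'.Ω, D'.f w' ≠ ⊤ →
        D'.lab D'.v2 w' = logVal ℓ lg (D'.f w').toNat ((D'.g w' : ℤ_[ℓ])) := by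
      intro w' hw'
      set w := e.φ.symm w' with hw
      have hφw : e.φ w = w' := e.φ.apply_symm_apply w'
      have hfw : D.f w = D'.f w' := by rw [← e.f_eq w, hφw]
      have hwfin : D.f w ≠ ⊤ := by rw [hfw]; exact hw'
      have hrel : D.Rel D.v1 w :=
        ⟨fun h => hwfin (h ▸ hfv1), fun h => hwfin h.2⟩
      have hle := e.lab_eq D.v1 w hrel
      rw [hφw, hA] at hle
      have hgw : D'.g w' = D.g w := by rw [← hφw]; exact e.g_eq w hwfin
      rw [hle, hlabv1 w hwfin, hfw, hgw]
    haveI : NeZero (ℓ ^ 1) := ⟨pow_ne_zero _ hℓp.ne_zero⟩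
    set L := logVal ℓ lg 1 (((1 : ℕ) : ℤ_[ℓ])) with hL
    have hLlt : L < ℓ := by
      have : L < ℓ ^ 1 := ZMod.val_lt _
      simpa using this
    set c : ℕ := if L = 0 then 1 else 0 with hc0
    have hcne : c ≠ L := by
      rcases eq_or_ne L 0 with h | h <;> simp [hc0, h]
      exact fun hh => h hh.symm
    have hclt : c < ℓ := by
      rcases eq_or_ne L 0 with h | h <;> simp [hc0, h] <;> omega
    set S : Finset D'.Ω := {D'.v1, D'.v2} with hS
    have hmem : ∀ s ∈ S, D'.f s = ⊤ := by
      intro s hs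
      rcases Finset.mem_insert.1 hs with h | h
      · rw [h]; exact hfv1'
      · rw [Finset.mem_singleton.1 h]; exact hfv2'
    have hminS : ∀ s ∈ S, (min ((1 : ℕ) : ℕ∞) (D'.f s)).toNat = 1 := by
      intro s hs
      rw [hmem s hs]
      simp
    obtain ⟨v, hvS, hfv, hgv, hlabv⟩ :=
      hRado' S (by simp [hS]) (by simp [hS]) 1 le_rfl 1 (by simpa using hℓp.one_lt)
        hℓp.not_dvd_one (fun _ => 0) (fun s => if s = D'.v1 then L else c)
        (fun s hs => by
          rw [hminS s hs]
          simpa using hℓp.pos)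
        (fun s hs => by
          rw [hminS s hs]
          simp only [pow_one]
          split_ifs <;> [exact hLlt; exact hclt])
        (by simp [hL]) rfl rfl
    have h1' := (hlabv D'.v2 (by simp [hS])).2
    rw [if_neg (fun hh => hne' hh.symm)] at h1'
    have h2' := key v (by rw [hfv]; simp)
    rw [hfv, hgv] at h2'
    simp only [ENat.toNat_coe] at h2'
    exact hcne (h1'.symm.trans h2')
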